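/- For every natural number i ≥ 0 and every x ∈ [0,1], ∫_{[0,1]³} 1{ξ₂ < min(ξ₁, ξ₃, x)} (x^i + ξ₂^i + 2ξ₁^i) dξ₁dξ₂dξ₃ = x^{i+1}·[ (x²/3 − x + 1) + (x²/(i+3) − 2x/(i+2) + 1/(i+1)) + (2x/(i+1))·(x/(i+3) − 1/(i+2)) ] + x(2−x)/(i+1). -/

import Mathlib

open MeasureTheory
open intervalIntegral in
lemma bs_integral_pow {a b : ℝ} (n : ℕ) : ∫ (x : ℝ) in a..b, x ^ n = (b ^ (n + 1) - a ^ (n + 1)) / ((n:ℝ) + 1) := integral_pow n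

lemma bs_ae_ne (m : ℝ) : ∀ᵐ t : ℝ, t ≠ m := by
  refine MeasureTheory.ae_iff.mpr ?_
  simpa using Real.volume_singleton (x := m)

lemma bs_L1 (a c : ℝ) (ha0 : 0 ≤ a) (ha1 : a ≤ 1) :
    (∫ t in (0:ℝ)..1, if a < t then c else 0) = c * (1 - a) := by
  have hind : ∀ p q : ℝ,
      IntervalIntegrable (fun t => if a < t then c else 0) volume p q := by
    intro p q
    have h : (fun t => if a < t then c else 0)
        = Set.indicator (Set.Ioi a) (fun _ => c) := by
      funext t; by_cases h : a < t <;> simp [Set.indicator, Set.mem_Ioi, h]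
    rw [h, intervalIntegrable_iff]
    exact (integrableOn_const measure_Ioc_lt_top.ne).indicator measurableSet_Ioi
  rw [← intervalIntegral.integral_add_adjacent_intervals (b := a) (hind 0 a) (hind a 1)]
  have h1 : (∫ t in (0:ℝ)..a, if a < t then c else 0) = 0 := by
    rw [intervalIntegral.integral_congr (g := fun _ => (0:ℝ)) ?_]
    · simp
    · intro t ht
      rw [Set.uIcc_of_le ha0] at ht
      simp [not_lt.mpr ht.2]
  have h2 : (∫ t in a..(1:ℝ), if a < t then c else 0) = c * (1 - a) := by
    rw [intervalIntegral.integral_congr_ae (g := fun _ => c) ?_]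
    · simp [mul_comm]
    · filter_upwards with t ht
      rw [Set.uIoc_of_le ha1] at ht
      simp [ht.1]
  rw [h1, h2, zero_add]

lemma bs_L2 (m : ℝ) (g : ℝ → ℝ) (hg : Continuous g) (h0 : 0 ≤ m) (h1 : m ≤ 1) :
    (∫ t in (0:ℝ)..1, if t < m then g t else 0) = ∫ t in (0:ℝ)..m, g t := by
  have hf : ∀ p q : ℝ,
      IntervalIntegrable (fun t => if t < m then g t else 0) volume p q := by
    intro p q
    have h : (fun t => if t < m then g t else 0) = Set.indicator (Set.Iio m) g := by
      funext t; by_cases h : t < m <;> simp [Set.indicator, h]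
    rw [h, intervalIntegrable_iff]
    exact (intervalIntegrable_iff.mp (hg.intervalIntegrable p q)).indicator measurableSet_Iio
  rw [← intervalIntegral.integral_add_adjacent_intervals (b := m) (hf 0 m) (hf m 1)]
  have h2 : (∫ t in m..(1:ℝ), if t < m then g t else 0) = 0 := by
    rw [intervalIntegral.integral_congr (g := fun _ => (0:ℝ)) ?_]
    · simp
    · intro t ht
      rw [Set.uIcc_of_le h1] at ht
      simp [not_lt.mpr ht.1]
  have h1' : (∫ t in (0:ℝ)..m, if t < m then g t else 0) = ∫ t in (0:ℝ)..m, g t := by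
    apply intervalIntegral.integral_congr_ae
    filter_upwards [bs_ae_ne m] with t htm ht
    rw [Set.uIoc_of_le h0] at ht
    simp [lt_of_le_of_ne ht.2 htm]
  rw [h1', h2, add_zero]

lemma bs_int_four (p q r s : ℕ) (A B C D a b : ℝ) :
    (∫ t in a..b, (A*t^p + B*t^q + C*t^r + D*t^s)) =
      A*(b^(p+1)-a^(p+1))/((p:ℝ)+1) + B*(b^(q+1)-a^(q+1))/((q:ℝ)+1)
      + C*(b^(r+1)-a^(r+1))/((r:ℝ)+1) + D*(b^(s+1)-a^(s+1))/((s:ℝ)+1) := by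
  have h : ∀ (E : ℝ) (n : ℕ), IntervalIntegrable (fun t => E * t^n) volume a b :=
    fun E n => ((continuous_const.mul (continuous_pow n)).intervalIntegrable a b)
  rw [intervalIntegral.integral_add (((h A p).add (h B q)).add (h C r)) (h D s),
      intervalIntegral.integral_add ((h A p).add (h B q)) (h C r),
      intervalIntegral.integral_add (h A p) (h B q)]
  simp only [intervalIntegral.integral_const_mul, bs_integral_pow]
  ring

set_option maxHeartbeats 1000000 in
/-- Evaluation of the one-step transition integral for a single monomial in the
four-species Bak–Sneppen model. -/
theorem bs_monomial_transition_integral (i : ℕ) (x : ℝ) (hx : x ∈ Set.Icc (0 : ℝ) 1) :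
    (∫ ξ₁ in (0:ℝ)..1, ∫ ξ₂ in (0:ℝ)..1, ∫ ξ₃ in (0:ℝ)..1,
        (if ξ₂ < min ξ₁ (min ξ₃ x) then x ^ i + ξ₂ ^ i + 2 * ξ₁ ^ i else 0))
      = x ^ (i + 1) *
          ((x ^ 2 / 3 - x + 1)
            + (x ^ 2 / ((i : ℝ) + 3) - 2 * x / ((i : ℝ) + 2) + 1 / ((i : ℝ) + 1))
            + (2 * x / ((i : ℝ) + 1)) * (x / ((i : ℝ) + 3) - 1 / ((i : ℝ) + 2)))
        + x * (2 - x) / ((i : ℝ) + 1) := by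
  obtain ⟨hx0, hx1⟩ := hx
  have hi1 : ((i:ℝ)+1) ≠ 0 := by positivity
  have hi1' : ((i:ℝ)+1+1) ≠ 0 := by positivity
  have hi1'' : ((i:ℝ)+1+1+1) ≠ 0 := by positivity
  have hi2 : ((i:ℝ)+2) ≠ 0 := by positivity
  have hi3 : ((i:ℝ)+3) ≠ 0 := by positivity
  have hz : ∀ n : ℕ, (0:ℝ)^(n+1) = 0 := fun n => zero_pow (Nat.succ_ne_zero n)
  have step2 : ∀ (K m : ℝ), (∫ t in (0:ℝ)..m, (x^i + t^i + K) * (1-t))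
      = (x^i+K)*m - (x^i+K)*m^2/2 + m^(i+1)/((i:ℝ)+1) - m^(i+2)/((i:ℝ)+2) := by
    intro K m
    have hre : Set.EqOn (fun t : ℝ => (x^i + t^i + K)*(1-t))
        (fun t : ℝ => (x^i+K)*t^0 + (-(x^i+K))*t^1 + 1*t^i + (-1)*t^(i+1))
        (Set.uIcc 0 m) := fun t _ => by ring
    rw [intervalIntegral.integral_congr hre, bs_int_four]
    simp only [hz, pow_one]
    push_cast
    field_simp
    ring
  have step1 : Set.EqOn
      (fun ξ₁ => ∫ ξ₂ in (0:ℝ)..1, ∫ ξ₃ in (0:ℝ)..1,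
          (if ξ₂ < min ξ₁ (min ξ₃ x) then x ^ i + ξ₂ ^ i + 2 * ξ₁ ^ i else 0))
      (fun ξ₁ => ∫ ξ₂ in (0:ℝ)..(min ξ₁ x), (x ^ i + ξ₂ ^ i + 2 * ξ₁ ^ i) * (1 - ξ₂))
      (Set.uIcc 0 1) := by
    intro ξ₁ hξ₁
    rw [Set.uIcc_of_le (by norm_num : (0:ℝ) ≤ 1)] at hξ₁
    have key : Set.EqOn
        (fun ξ₂ => ∫ ξ₃ in (0:ℝ)..1,
            (if ξ₂ < min ξ₁ (min ξ₃ x) then x ^ i + ξ₂ ^ i + 2 * ξ₁ ^ i else 0))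
        (fun ξ₂ => if ξ₂ < min ξ₁ x then (x ^ i + ξ₂ ^ i + 2 * ξ₁ ^ i) * (1 - ξ₂) else 0)
        (Set.uIcc 0 1) := by
      intro ξ₂ hξ₂
      rw [Set.uIcc_of_le (by norm_num : (0:ℝ) ≤ 1)] at hξ₂
      simp only
      have hrw : (fun ξ₃ : ℝ => (if ξ₂ < min ξ₁ (min ξ₃ x) then x ^ i + ξ₂ ^ i + 2 * ξ₁ ^ i else 0))
          = fun ξ₃ => (if ξ₂ < min ξ₁ x then
              (if ξ₂ < ξ₃ then x ^ i + ξ₂ ^ i + 2 * ξ₁ ^ i else 0) else 0) := by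
        funext ξ₃
        by_cases ha : ξ₂ < ξ₁ <;> by_cases hb : ξ₂ < ξ₃ <;> by_cases hc : ξ₂ < x <;>
          simp [lt_min_iff, ha, hb, hc]
      rw [hrw]
      by_cases h1 : ξ₂ < min ξ₁ x
      · simp only [if_pos h1]
        exact bs_L1 ξ₂ _ hξ₂.1 hξ₂.2
      · simp only [if_neg h1]
        simp
    simp only
    rw [intervalIntegral.integral_congr key]
    exact bs_L2 (min ξ₁ x) _ (by continuity) (le_min hξ₁.1 hx0) (min_le_of_left_le hξ₁.2)
  rw [intervalIntegral.integral_congr step1]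
  have step2' : Set.EqOn
      (fun ξ₁ => ∫ ξ₂ in (0:ℝ)..(min ξ₁ x), (x ^ i + ξ₂ ^ i + 2 * ξ₁ ^ i) * (1 - ξ₂))
      (fun ξ₁ => (x^i+2*ξ₁^i)*(min ξ₁ x) - (x^i+2*ξ₁^i)*(min ξ₁ x)^2/2
          + (min ξ₁ x)^(i+1)/((i:ℝ)+1) - (min ξ₁ x)^(i+2)/((i:ℝ)+2)) (Set.uIcc 0 1) :=
    fun ξ₁ _ => step2 (2*ξ₁^i) (min ξ₁ x)
  rw [intervalIntegral.integral_congr step2']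
  have hMint : ∀ p q : ℝ, IntervalIntegrable
      (fun ξ₁ => (x^i+2*ξ₁^i)*(min ξ₁ x) - (x^i+2*ξ₁^i)*(min ξ₁ x)^2/2
          + (min ξ₁ x)^(i+1)/((i:ℝ)+1) - (min ξ₁ x)^(i+2)/((i:ℝ)+2)) volume p q :=
    fun p q => by
    have cmin : Continuous fun ξ₁ : ℝ => min ξ₁ x := continuous_id.min continuous_const
    have c1 : Continuous fun ξ₁ : ℝ => (x^i+2*ξ₁^i) :=
      continuous_const.add (continuous_const.mul (continuous_pow i))
    exact Continuous.intervalIntegrable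
      (((c1.mul cmin).sub (((c1.mul (cmin.pow 2))).div_const 2)).add
          (((cmin.pow (i+1)).div_const _)) |>.sub ((cmin.pow (i+2)).div_const _)) p q
  rw [← intervalIntegral.integral_add_adjacent_intervals (b := x) (hMint 0 x) (hMint x 1)]
  have hp1 : Set.EqOn
      (fun ξ₁ => (x^i+2*ξ₁^i)*(min ξ₁ x) - (x^i+2*ξ₁^i)*(min ξ₁ x)^2/2
          + (min ξ₁ x)^(i+1)/((i:ℝ)+1) - (min ξ₁ x)^(i+2)/((i:ℝ)+2))
      (fun t => (x^i)*t^1 + (-(x^i)/2)*t^2 + (2+1/((i:ℝ)+1))*t^(i+1)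
          + (-1-1/((i:ℝ)+2))*t^(i+2)) (Set.uIcc 0 x) := by
    intro t ht
    rw [Set.uIcc_of_le hx0] at ht
    simp only
    rw [min_eq_left ht.2]
    field_simp
    ring
  have hp2 : Set.EqOn
      (fun ξ₁ => (x^i+2*ξ₁^i)*(min ξ₁ x) - (x^i+2*ξ₁^i)*(min ξ₁ x)^2/2
          + (min ξ₁ x)^(i+1)/((i:ℝ)+1) - (min ξ₁ x)^(i+2)/((i:ℝ)+2))
      (fun t => (x^i*(x - x^2/2) + x^(i+1)/((i:ℝ)+1) - x^(i+2)/((i:ℝ)+2))*t^0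
          + (2*(x-x^2/2))*t^i + 0*t^0 + 0*t^0) (Set.uIcc x 1) := by
    intro t ht
    rw [Set.uIcc_of_le hx1] at ht
    simp only
    rw [min_eq_right ht.1]
    ring
  rw [intervalIntegral.integral_congr hp1, intervalIntegral.integral_congr hp2,
      bs_int_four, bs_int_four]
  simp only [hz, one_pow, pow_one, pow_zero]
  push_cast
  field_simp
  ring
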